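/- Let g : ℝ^d → ℝ ∪ {+∞} be proper convex lower semicontinuous and γ : [0,+∞) → ℝ^d an absolutely continuous curve such that liminf_{t→∞} s_g(γ(t)) = 0 and ∫₀^∞ s_g(γ(t)) ‖γ̇(t)‖ dt < +∞. Then liminf_{t→∞} g(γ(t)) = inf g. -/

import Mathlib

open Filter Topology MeasureTheory Set Metric RealInnerProductSpace
open scoped ENNReal NNReal

noncomputable section

def Proper {d : ℕ} (f : EuclideanSpace ℝ (Fin d) → EReal) : Prop :=
  (∀ x, f x ≠ ⊥) ∧ ∃ x, f x ≠ ⊤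

def ConvexFn {d : ℕ} (f : EuclideanSpace ℝ (Fin d) → EReal) : Prop :=
  Convex ℝ {p : EuclideanSpace ℝ (Fin d) × ℝ | f p.1 ≤ (p.2 : EReal)}

def Subdiff {d : ℕ} (f : EuclideanSpace ℝ (Fin d) → EReal) (x : EuclideanSpace ℝ (Fin d)) :
    Set (EuclideanSpace ℝ (Fin d)) :=
  {v | f x ≠ ⊤ ∧ ∀ y, f x + ((⟪v, y - x⟫ : ℝ) : EReal) ≤ f y}

def slopeFn {d : ℕ} (f : EuclideanSpace ℝ (Fin d) → EReal) (x : EuclideanSpace ℝ (Fin d)) : EReal :=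
  sInf ((fun v => (‖v‖ : EReal)) '' Subdiff f x)

def eLiminf {d : ℕ} (φ : ℕ → EuclideanSpace ℝ (Fin d) → EReal)
    (x : EuclideanSpace ℝ (Fin d)) : EReal :=
  ⨅ (u : ℕ → EuclideanSpace ℝ (Fin d)) (_ : Tendsto u atTop (𝓝 x)),
    Filter.liminf (fun n => φ n (u n)) atTop

def eLimsup {d : ℕ} (φ : ℕ → EuclideanSpace ℝ (Fin d) → EReal)
    (x : EuclideanSpace ℝ (Fin d)) : EReal :=
  ⨅ (u : ℕ → EuclideanSpace ℝ (Fin d)) (_ : Tendsto u atTop (𝓝 x)),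
    Filter.limsup (fun n => φ n (u n)) atTop

def EpiConv {d : ℕ} (φ : ℕ → EuclideanSpace ℝ (Fin d) → EReal)
    (ψ : EuclideanSpace ℝ (Fin d) → EReal) : Prop :=
  ∀ x, eLimsup φ x ≤ ψ x ∧ ψ x ≤ eLiminf φ x

def edom {d : ℕ} (h : EuclideanSpace ℝ (Fin d) → EReal) : Set (EuclideanSpace ℝ (Fin d)) :=
  {x | h x ≠ ⊤}

def rdom {d : ℕ} (h : EuclideanSpace ℝ (Fin d) → EReal) : Set (EuclideanSpace ℝ (Fin d)) :=
  {x | h x ≠ ⊤ ∧ h x ≠ ⊥}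

def domSub {d : ℕ} (f : EuclideanSpace ℝ (Fin d) → EReal) : Set (EuclideanSpace ℝ (Fin d)) :=
  {x | (Subdiff f x).Nonempty}

def erealToENNReal (x : EReal) : ℝ≥0∞ :=
  if x = ⊤ then ⊤ else ENNReal.ofReal x.toReal

lemma erealToENNReal_mono_coe {x : EReal} {c : ℝ} (h : (c : EReal) ≤ x) :
    ENNReal.ofReal c ≤ erealToENNReal x := by
  unfold erealToENNReal
  split_ifs with hx
  · exact le_top
  · have hxb : x ≠ ⊥ := by
      intro hb
      rw [hb, le_bot_iff] at h
      exact EReal.coe_ne_bot c h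
    have : (c : EReal) ≤ ↑x.toReal := by rwa [EReal.coe_toReal hx hxb]
    exact ENNReal.ofReal_le_ofReal (EReal.coe_le_coe_iff.mp this)

theorem infimizing_by_slope_integrability {d : ℕ} (g : EuclideanSpace ℝ (Fin d) → EReal)
    (hprop : Proper g) (hconv : ConvexFn g) (hlsc : LowerSemicontinuous g)
    (γ γ' : ℝ → EuclideanSpace ℝ (Fin d))
    (hAC : ∀ t : ℝ, 0 ≤ t → IntegrableOn γ' (Ioc 0 t) volume ∧
      γ t = γ 0 + ∫ s in Ioc 0 t, γ' s)
    (hslope0 : Filter.liminf (fun t => slopeFn g (γ t)) atTop = 0)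
    (hint : ∫⁻ t in Ioi (0:ℝ), erealToENNReal (slopeFn g (γ t)) * ‖γ' t‖₊ < ⊤) :
    Filter.liminf (fun t => g (γ t)) atTop = ⨅ x, g x := by
  classical
  set L := Filter.liminf (fun t => g (γ t)) atTop with hL
  have hinf_le : (⨅ x, g x) ≤ L :=
    Filter.le_liminf_of_le (by isBoundedDefault)
      (Eventually.of_forall fun t => iInf_le g (γ t))
  by_contra hne
  have hlt : (⨅ x, g x) < L := lt_of_le_of_ne hinf_le (fun h => hne h.symm)
  obtain ⟨y, hy⟩ := iInf_lt_iff.mp hlt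
  obtain ⟨z, hz1, hz2⟩ := exists_between hy
  have hznb : z ≠ ⊥ := by
    intro h; rw [h] at hz1; exact absurd hz1 (by simp)
  have hznt : z ≠ ⊤ := (hz2.trans_le le_top).ne
  set b := z.toReal with hbdef
  have hzb : z = (b : EReal) := (EReal.coe_toReal hznt hznb).symm
  have hgy_nt : g y ≠ ⊤ := (hz1.trans_le le_top).ne
  have hgy_nb : g y ≠ ⊥ := hprop.1 y
  set gy := (g y).toReal with hgydef
  have hgy : g y = (gy : EReal) := (EReal.coe_toReal hgy_nt hgy_nb).symm
  set ε := b - gy with hεdef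
  have hε : 0 < ε := by
    have : (gy : EReal) < (b : EReal) := by rw [← hgy, ← hzb]; exact hz1
    have := EReal.coe_lt_coe_iff.mp this
    simp only [hεdef]; linarith
  -- eventually b < g (γ t)
  have hev : ∀ᶠ t in atTop, (b : EReal) < g (γ t) :=
    Filter.eventually_lt_of_lt_liminf (by rw [← hzb, ← hL]; exact hz2)
  obtain ⟨T₀, hT₀⟩ := eventually_atTop.mp hev
  set T := max T₀ 0 with hTdef
  have hT0 : (0:ℝ) ≤ T := le_max_right _ _
  set r : ℝ → ℝ := fun t => ‖γ t - y‖ with hrdef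
  -- key slope lower bound
  have keyA : ∀ t, T ≤ t → ∀ M : ℝ, 0 < M → r t ≤ M →
      ((ε / M : ℝ) : EReal) ≤ slopeFn g (γ t) := by
    intro t ht M hM hrM
    apply le_sInf
    rintro _ ⟨v, hv, rfl⟩
    obtain ⟨hgt_nt, hineq⟩ := hv
    have hgt_nb : g (γ t) ≠ ⊥ := hprop.1 (γ t)
    set gx := (g (γ t)).toReal with hgxdef
    have hgx : g (γ t) = (gx : EReal) := (EReal.coe_toReal hgt_nt hgt_nb).symm
    have h1 : gx + ⟪v, y - γ t⟫ ≤ gy := by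
      have h := hineq y
      rw [hgx, hgy, ← EReal.coe_add] at h
      exact EReal.coe_le_coe_iff.mp h
    have h2 : b < gx := by
      have h := hT₀ t (le_trans (le_max_left _ _) ht)
      rw [hgx] at h
      exact EReal.coe_lt_coe_iff.mp h
    have hCS : |⟪v, y - γ t⟫| ≤ ‖v‖ * r t := by
      have := abs_real_inner_le_norm v (y - γ t)
      rwa [norm_sub_rev y (γ t)] at this
    have hmul : ‖v‖ * r t ≤ ‖v‖ * M := mul_le_mul_of_nonneg_left hrM (norm_nonneg v)
    have hneg : -|⟪v, y - γ t⟫| ≤ ⟪v, y - γ t⟫ := neg_abs_le _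
    have h3 : ε < ‖v‖ * M := by simp only [hεdef]; linarith
    exact EReal.coe_le_coe_iff.mpr (le_of_lt ((div_lt_iff₀ hM).mpr h3))
  -- r is unbounded at infinity
  have hunb : ∀ M : ℝ, ∀ s : ℝ, ∃ t, s ≤ t ∧ T ≤ t ∧ M < r t := by
    intro M s
    set M' := max M 1 with hM'def
    have hM' : (0:ℝ) < M' := lt_of_lt_of_le one_pos (le_max_right _ _)
    have hfr : ∃ᶠ t in atTop, slopeFn g (γ t) < ((ε / M' : ℝ) : EReal) :=
      Filter.frequently_lt_of_liminf_lt (h := by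
        rw [hslope0]
        have : (0:ℝ) < ε / M' := div_pos hε hM'
        exact_mod_cast EReal.coe_lt_coe_iff.mpr this)
    obtain ⟨t, ⟨hts, htT⟩, hslt⟩ :=
      ((eventually_ge_atTop s).and (eventually_ge_atTop T)).and_frequently hfr |>.exists
    refine ⟨t, hts, htT, ?_⟩
    by_contra hle
    push_neg at hle
    have hrM' : r t ≤ M' := hle.trans (le_max_left _ _)
    exact absurd (keyA t htT M' hM' hrM') (not_le.mpr hslt)
  -- continuity of γ on [0, b']
  have hcont : ∀ b' : ℝ, 0 ≤ b' → ContinuousOn γ (Icc 0 b') := by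
    intro b' hb'
    have hint' : IntegrableOn γ' (Icc 0 b') volume :=
      (integrableOn_Icc_iff_integrableOn_Ioc).mpr (hAC b' hb').1
    have h1 : ContinuousOn (fun x => γ 0 + ∫ t in Ioc 0 x, γ' t) (Icc 0 b') :=
      continuousOn_const.add (intervalIntegral.continuousOn_primitive hint')
    exact h1.congr fun t ht => (hAC t ht.1).2
  -- integral representation of increments
  have hsum : ∀ a' b' : ℝ, 0 ≤ a' → a' ≤ b' → γ b' - γ a' = ∫ s in Ioc a' b', γ' s := by
    intro a' b' ha' hab
    have hb0 : (0:ℝ) ≤ b' := ha'.trans hab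
    have iab : IntegrableOn γ' (Ioc a' b') volume :=
      ((hAC b' hb0).1).mono_set (Ioc_subset_Ioc_left ha')
    have hsplit : ∫ s in Ioc 0 b', γ' s =
        (∫ s in Ioc 0 a', γ' s) + ∫ s in Ioc a' b', γ' s := by
      rw [← setIntegral_union (Ioc_disjoint_Ioc_of_le le_rfl) measurableSet_Ioc (hAC a' ha').1 iab,
        Ioc_union_Ioc_eq_Ioc ha' hab]
    rw [(hAC b' hb0).2, (hAC a' ha').2, hsplit]
    abel
  -- step lemma
  have hstep : ∀ a : ℝ, T ≤ a → ∃ bb, a < bb ∧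
      ENNReal.ofReal (ε / 2) ≤
        ∫⁻ t in Ioc a bb, erealToENNReal (slopeFn g (γ t)) * ‖γ' t‖₊ := by
    intro a ha
    have ha0 : (0:ℝ) ≤ a := hT0.trans ha
    set c := r a with hcdef
    have hc0 : (0:ℝ) ≤ c := norm_nonneg _
    obtain ⟨ts, hts, htsT, hrts⟩ := hunb (2 * c + 1) a
    have hrc : c < 2 * c + 1 := by linarith
    have hcontr : ContinuousOn r (Icc a ts) := by
      have h1 : ContinuousOn (fun t => γ t - y) (Icc a ts) :=
        ((hcont ts (ha0.trans hts)).mono (Icc_subset_Icc_left ha0)).sub continuousOn_const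
      exact h1.norm
    set S := Icc a ts ∩ r ⁻¹' (Ici (2 * c + 1)) with hSdef
    have hS_closed : IsClosed S :=
      hcontr.preimage_isClosed_of_isClosed isClosed_Icc isClosed_Ici
    have hS_ne : S.Nonempty := ⟨ts, ⟨hts, le_refl ts⟩, le_of_lt hrts⟩
    have hS_bdd : BddBelow S := ⟨a, fun x hx => hx.1.1⟩
    set bb := sInf S with hbbdef
    have hbbS : bb ∈ S := hS_closed.csInf_mem hS_ne hS_bdd
    have hab : a ≤ bb := hbbS.1.1
    have hbt : bb ≤ ts := hbbS.1.2
    have hrbb_ge : 2 * c + 1 ≤ r bb := hbbS.2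
    have habs : a < bb := by
      rcases lt_or_eq_of_le hab with h | h
      · exact h
      · exfalso; rw [← h] at hrbb_ge; exact absurd hrbb_ge (not_le.mpr hrc)
    have hmin : ∀ u ∈ Icc a bb, u ≠ bb → r u < 2 * c + 1 := by
      intro u hu hne'
      by_contra hge
      push_neg at hge
      have huS : u ∈ S := ⟨⟨hu.1, hu.2.trans hbt⟩, hge⟩
      exact hne' (le_antisymm hu.2 (csInf_le hS_bdd huS))
    have hrbb : r bb = 2 * c + 1 := by
      by_contra hne'
      have hgt : 2 * c + 1 < r bb := lt_of_le_of_ne hrbb_ge (fun h => hne' h.symm)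
      have : (2 * c + 1) ∈ r '' Icc a bb :=
        intermediate_value_Icc hab (hcontr.mono (Icc_subset_Icc_right hbt))
          ⟨hrc.le, hgt.le⟩
      obtain ⟨u, hu, hru⟩ := this
      rcases eq_or_ne u bb with h | h
      · rw [h] at hru; exact hne' hru
      · exact absurd hru (ne_of_lt (hmin u hu h))
    have hbound : ∀ u ∈ Icc a bb, r u ≤ 2 * c + 1 := by
      intro u hu
      rcases eq_or_ne u bb with h | h
      · rw [h, hrbb]
      · exact (hmin u hu h).le
    have hM : (0:ℝ) < 2 * c + 1 := by linarith
    have hb0 : (0:ℝ) ≤ bb := ha0.trans hab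
    have hiab : IntegrableOn γ' (Ioc a bb) volume :=
      ((hAC bb hb0).1).mono_set (Ioc_subset_Ioc_left ha0)
    refine ⟨bb, habs, ?_⟩
    have hnormle : c + 1 ≤ ∫ t in Ioc a bb, ‖γ' t‖ := by
      have h1 : ‖γ bb - γ a‖ ≤ ∫ t in Ioc a bb, ‖γ' t‖ := by
        rw [hsum a bb ha0 hab]
        exact norm_integral_le_integral_norm _
      have h2 : r bb - r a ≤ ‖γ bb - γ a‖ := by
        have := norm_sub_norm_le (γ bb - y) (γ a - y)
        simpa [hrdef] using this
      rw [hrbb, ← hcdef] at h2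
      linarith
    calc ENNReal.ofReal (ε / 2)
        ≤ ENNReal.ofReal (ε / (2 * c + 1)) * ENNReal.ofReal (c + 1) := by
          rw [← ENNReal.ofReal_mul (by positivity)]
          apply ENNReal.ofReal_le_ofReal
          rw [div_mul_eq_mul_div, le_div_iff₀ hM]
          nlinarith
      _ ≤ ENNReal.ofReal (ε / (2 * c + 1)) * ∫⁻ t in Ioc a bb, ‖γ' t‖₊ := by
          apply mul_le_mul_right
          have := ofReal_integral_norm_eq_lintegral_enorm hiab
          simp only [enorm_eq_nnnorm] at this
          rw [← this]
          exact ENNReal.ofReal_le_ofReal hnormle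
      _ = ∫⁻ t in Ioc a bb, ENNReal.ofReal (ε / (2 * c + 1)) * ‖γ' t‖₊ :=
          (lintegral_const_mul' _ _ ENNReal.ofReal_ne_top).symm
      _ ≤ ∫⁻ t in Ioc a bb, erealToENNReal (slopeFn g (γ t)) * ‖γ' t‖₊ := by
          apply lintegral_mono_ae
          filter_upwards [ae_restrict_mem measurableSet_Ioc] with t ht
          apply mul_le_mul_left
          exact erealToENNReal_mono_coe
            (keyA t (ha.trans ht.1.le) _ hM (hbound t ⟨ht.1.le, ht.2⟩))
  -- iterate
  have hind : ∀ n : ℕ, ∃ s, T ≤ s ∧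
      (n : ℝ≥0∞) * ENNReal.ofReal (ε / 2) ≤
        ∫⁻ t in Ioc T s, erealToENNReal (slopeFn g (γ t)) * ‖γ' t‖₊ := by
    intro n
    induction n with
    | zero => exact ⟨T, le_refl T, by simp⟩
    | succ n ih =>
      obtain ⟨s, hs, hle⟩ := ih
      obtain ⟨b', hb', hstepint⟩ := hstep s hs
      refine ⟨b', hs.trans hb'.le, ?_⟩
      have hsplit : (∫⁻ t in Ioc T b', erealToENNReal (slopeFn g (γ t)) * ‖γ' t‖₊) =
          (∫⁻ t in Ioc T s, erealToENNReal (slopeFn g (γ t)) * ‖γ' t‖₊) +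
          ∫⁻ t in Ioc s b', erealToENNReal (slopeFn g (γ t)) * ‖γ' t‖₊ := by
        rw [← Ioc_union_Ioc_eq_Ioc hs hb'.le,
          lintegral_union measurableSet_Ioc (Ioc_disjoint_Ioc_of_le le_rfl)]
      rw [hsplit]
      push_cast
      rw [add_mul, one_mul]
      exact add_le_add hle hstepint
  -- contradiction
  set I := ∫⁻ t in Ioi (0:ℝ), erealToENNReal (slopeFn g (γ t)) * ‖γ' t‖₊ with hIdef
  have hIub : ∀ n : ℕ, (n : ℝ≥0∞) * ENNReal.ofReal (ε / 2) ≤ I := by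
    intro n
    obtain ⟨s, hs, hle⟩ := hind n
    refine hle.trans (lintegral_mono_set ?_)
    intro x hx
    exact lt_of_le_of_lt hT0 hx.1
  have hc0 : ENNReal.ofReal (ε / 2) ≠ 0 := by
    simp only [ne_eq, ENNReal.ofReal_eq_zero, not_le]
    linarith
  have hInt : I ≠ ⊤ := hint.ne
  have hfin : I / ENNReal.ofReal (ε / 2) ≠ ⊤ := (ENNReal.div_lt_top hInt hc0).ne
  obtain ⟨n, hn⟩ := ENNReal.exists_nat_gt hfin
  have : (n : ℝ≥0∞) ≤ I / ENNReal.ofReal (ε / 2) :=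
    (ENNReal.le_div_iff_mul_le (Or.inl hc0) (Or.inl ENNReal.ofReal_ne_top)).mpr (hIub n)
  exact absurd this (not_le.mpr hn)
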